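/- arXiv:2007.06018 — 4 statements merged into one kernel-verified Lean document; each statement's English description precedes it below -/
import Mathlib

section
/- Let S be a countable type, let q and p be probability mass functions on S with p(s) = r(s)·q(s) for all s ∈ S, let f : ℝ → ℝ be convex and differentiable, and let r_ψ : S → ℝ. Assume the summability of s ↦ q(s)·f(r(s)), s ↦ p(s)·f′(r_ψ(s)), s ↦ q(s)·r_ψ(s)·f′(r_ψ(s)), and s ↦ q(s)·f(r_ψ(s)). Then ∑_s p(s)·f′(r_ψ(s)) − ∑_s q(s)·[r_ψ(s)·f′(r_ψ(s)) − f(r_ψ(s))] ≤ ∑_s q(s)·f(r(s)); that is, the variational objective E_p[f′(r_ψ)] − E_q[r_ψ·f′(r_ψ) − f(r_ψ)] is a lower bound on the f-divergence D_f(p ‖ q). -/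
lemma tangent_le {f f' : ℝ → ℝ} (hconv : ConvexOn ℝ Set.univ f)
    (hderiv : ∀ x, HasDerivAt f (f' x) x) (x y : ℝ) :
    f x + f' x * (y - x) ≤ f y := by
  have hd : deriv f x = f' x := (hderiv x).deriv
  rcases lt_trichotomy x y with h | h | h
  · have h2 : f' x ≤ (f y - f x) / (y - x) := by
      have := hconv.deriv_le_slope (Set.mem_univ x) (Set.mem_univ y) h (hderiv x).differentiableAt
      rwa [hd, slope_def_field] at this
    have h3 : f' x * (y - x) ≤ f y - f x := by
      rw [← le_div_iff₀ (by linarith)]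
      exact h2
    linarith
  · subst h; simp
  · have h2 : (f x - f y) / (x - y) ≤ f' x := by
      have := hconv.slope_le_deriv (Set.mem_univ y) (Set.mem_univ x) h (hderiv x).differentiableAt
      rwa [hd, slope_def_field] at this
    have h3 : f x - f y ≤ f' x * (x - y) := by
      rw [← div_le_iff₀ (by linarith)]
      exact h2
    nlinarith

/-- Variational lower bound on the f-divergence (Proposition 2, inequality part):
`E_p[f′(r_ψ)] − E_q[r_ψ·f′(r_ψ) − f(r_ψ)] ≤ E_q[f(p/q)] = D_f(p ‖ q)`
for convex differentiable `f`, where `p = r·q`. -/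
theorem f_divergence_variational_lower_bound
    {S : Type*} [Countable S]
    (q p : S → ℝ) (r rpsi : S → ℝ)
    (hq0 : ∀ s, 0 ≤ q s) (hq1 : HasSum q 1)
    (hp0 : ∀ s, 0 ≤ p s) (hp1 : HasSum p 1)
    (hpr : ∀ s, p s = r s * q s)
    (f f' : ℝ → ℝ)
    (hconv : ConvexOn ℝ Set.univ f)
    (hderiv : ∀ x, HasDerivAt f (f' x) x)
    (h1 : Summable (fun s => q s * f (r s)))
    (h2 : Summable (fun s => p s * f' (rpsi s)))
    (h3 : Summable (fun s => q s * (rpsi s * f' (rpsi s))))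
    (h4 : Summable (fun s => q s * f (rpsi s))) :
    ∑' s, p s * f' (rpsi s) - ∑' s, q s * (rpsi s * f' (rpsi s) - f (rpsi s))
      ≤ ∑' s, q s * f (r s) := by
  have h34 : Summable (fun s => q s * (rpsi s * f' (rpsi s) - f (rpsi s))) := by
    have := h3.sub h4
    simpa [mul_sub] using this
  rw [← Summable.tsum_sub h2 h34]
  apply Summable.tsum_le_tsum _ (h2.sub h34) h1
  intro s
  have key := tangent_le hconv hderiv (rpsi s) (r s)
  have := mul_le_mul_of_nonneg_left key (hq0 s)
  rw [hpr s]
  nlinarith [hq0 s]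
end

section
/- In the setting of the variational lower bound — S countable, q, p probability mass functions on S with p(s) = r(s)·q(s), f : ℝ → ℝ strictly convex and differentiable, r_ψ : S → ℝ, with the stated summability assumptions — equality ∑_s p(s)·f′(r_ψ(s)) − ∑_s q(s)·[r_ψ(s)·f′(r_ψ(s)) − f(r_ψ(s))] = ∑_s q(s)·f(r(s)) holds if and only if r_ψ(s) = r(s) for every s ∈ S with q(s) > 0. -/
/-- Strict tangent line inequality for a strictly convex differentiable function. -/
lemma tangent_lt_of_strictConvexOn {f f' : ℝ → ℝ}
    (hconv : StrictConvexOn ℝ Set.univ f)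
    (hderiv : ∀ x, HasDerivAt f (f' x) x) {a b : ℝ} (hab : a ≠ b) :
    f' a * (b - a) < f b - f a := by
  rcases lt_or_gt_of_ne hab with h | h
  · have := hconv.lt_slope_of_hasDerivAt (Set.mem_univ a) (Set.mem_univ b) h (hderiv a)
    rw [slope_def_field] at this
    have hba : 0 < b - a := by linarith
    calc f' a * (b - a) < ((f b - f a) / (b - a)) * (b - a) := by
          exact mul_lt_mul_of_pos_right this hba
      _ = f b - f a := by field_simp
  · have := hconv.slope_lt_of_hasDerivAt (Set.mem_univ b) (Set.mem_univ a) h (hderiv a)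
    rw [slope_def_field] at this
    have hab' : 0 < a - b := by linarith
    have : ((f a - f b) / (a - b)) * (a - b) < f' a * (a - b) :=
      mul_lt_mul_of_pos_right this hab'
    rw [div_mul_cancel₀ _ (ne_of_gt hab')] at this
    nlinarith

/-- Equality condition of the variational bound (Proposition 2, tightness part):
for strictly convex differentiable `f`, the variational objective equals the
f-divergence `E_q[f(r)]` if and only if `r_ψ = r` on the support of `q`. -/
theorem f_divergence_variational_bound_tight_iff
    {S : Type*} [Countable S]
    (q p : S → ℝ) (r rpsi : S → ℝ)
    (hq0 : ∀ s, 0 ≤ q s) (hq1 : HasSum q 1)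
    (hp0 : ∀ s, 0 ≤ p s) (hp1 : HasSum p 1)
    (hpr : ∀ s, p s = r s * q s)
    (f f' : ℝ → ℝ)
    (hconv : StrictConvexOn ℝ Set.univ f)
    (hderiv : ∀ x, HasDerivAt f (f' x) x)
    (h1 : Summable (fun s => q s * f (r s)))
    (h2 : Summable (fun s => p s * f' (rpsi s)))
    (h3 : Summable (fun s => q s * (rpsi s * f' (rpsi s))))
    (h4 : Summable (fun s => q s * f (rpsi s))) :
    (∑' s, p s * f' (rpsi s) - ∑' s, q s * (rpsi s * f' (rpsi s) - f (rpsi s))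
        = ∑' s, q s * f (r s))
      ↔ ∀ s, 0 < q s → rpsi s = r s := by
  set g : S → ℝ := fun s =>
    q s * f (r s) - p s * f' (rpsi s) + q s * (rpsi s * f' (rpsi s) - f (rpsi s)) with hg
  have hgfactor : ∀ s, g s
      = q s * (f (r s) - f (rpsi s) - f' (rpsi s) * (r s - rpsi s)) := by
    intro s; simp only [hg, hpr s]; ring
  have hgnonneg : ∀ s, 0 ≤ g s := by
    intro s
    rw [hgfactor]
    rcases eq_or_ne (rpsi s) (r s) with he | hne
    · simp [he]
    · have := tangent_lt_of_strictConvexOn hconv hderiv hne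
      have : 0 ≤ f (r s) - f (rpsi s) - f' (rpsi s) * (r s - rpsi s) := by linarith
      exact mul_nonneg (hq0 s) this
  have h34 : Summable (fun s => q s * (rpsi s * f' (rpsi s) - f (rpsi s))) := by
    have := h3.sub h4
    simpa [mul_sub] using this
  have hgsum : Summable g := ((h1.sub h2).add h34)
  have htsum : ∑' s, g s
      = ∑' s, q s * f (r s)
        - (∑' s, p s * f' (rpsi s) - ∑' s, q s * (rpsi s * f' (rpsi s) - f (rpsi s))) := by
    rw [show (fun s => g s) = fun s =>
        (q s * f (r s) - p s * f' (rpsi s)) + q s * (rpsi s * f' (rpsi s) - f (rpsi s)) from rfl,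
      Summable.tsum_add (h1.sub h2) h34, Summable.tsum_sub h1 h2]
    ring
  constructor
  · intro heq s hqs
    have hzero : ∑' s, g s = 0 := by rw [htsum, heq]; ring
    have hall : ∀ s, g s = 0 := by
      intro t
      by_contra ht
      have hlt : 0 < g t := lt_of_le_of_ne (hgnonneg t) (Ne.symm ht)
      have := Summable.tsum_pos hgsum (fun s => hgnonneg s) t hlt
      exact absurd hzero (ne_of_gt this)
    by_contra hne
    have := tangent_lt_of_strictConvexOn hconv hderiv hne
    have h0 := hall s
    rw [hgfactor] at h0
    have : 0 < f (r s) - f (rpsi s) - f' (rpsi s) * (r s - rpsi s) := by linarith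
    nlinarith
  · intro hall
    have hgz : ∀ s, g s = 0 := by
      intro s
      rw [hgfactor]
      rcases eq_or_lt_of_le (hq0 s) with h0 | hpos
      · rw [← h0]; ring
      · rw [hall s hpos]; ring
    have : ∑' s, g s = 0 := by simp [hgz]
    rw [htsum] at this
    linarith
end

section
/- Let S be a countable type, let q and p be probability mass functions on S with p(s) = r(s)·q(s) for all s ∈ S, and let r_ψ : S → ℝ. Take f(t) = (t−1)²/2. Assuming the summability of s ↦ q(s)·(r(s)−1)², s ↦ q(s)·r_ψ(s)², and s ↦ p(s)·r_ψ(s), the integrated Bregman divergence satisfies BD_f(r ‖ r_ψ) = ∑_s q(s)·(r(s)−1)²/2 + (1/2)·∑_s q(s)·(r_ψ(s)² − 1) − ∑_s p(s)·(r_ψ(s) − 1). In particular, minimizing BD_f over r_ψ is equivalent, up to an additive constant independent of r_ψ, to minimizing (1/2)·E_q[r_ψ² − 1] − E_p[r_ψ − 1]. -/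
/-- Least-squares row of Table 4: for `f(t) = (t−1)²/2` (so `f′(t) = t−1`), the integrated
Bregman divergence decomposes as
`BD_f(r ‖ r_ψ) = E_q[(r−1)²/2] + (1/2)·E_q[r_ψ² − 1] − E_p[r_ψ − 1]`, where `p = r·q`;
hence minimizing `BD_f` over `r_ψ` is minimizing `(1/2)·E_q[r_ψ²−1] − E_p[r_ψ−1]`
up to a constant. -/
theorem bregman_least_squares_objective
    {S : Type*} [Countable S]
    (q p : S → ℝ) (r rpsi : S → ℝ)
    (hq0 : ∀ s, 0 ≤ q s) (hq1 : HasSum q 1)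
    (hp0 : ∀ s, 0 ≤ p s) (hp1 : HasSum p 1)
    (hpr : ∀ s, p s = r s * q s)
    (h1 : Summable (fun s => q s * (r s - 1) ^ 2))
    (h2 : Summable (fun s => q s * rpsi s ^ 2))
    (h3 : Summable (fun s => p s * rpsi s)) :
    ∑' s, q s * ((r s - 1) ^ 2 / 2 - (rpsi s - 1) ^ 2 / 2 - (rpsi s - 1) * (r s - rpsi s)) =
      ∑' s, q s * (r s - 1) ^ 2 / 2
        + (1 / 2) * ∑' s, q s * (rpsi s ^ 2 - 1)
        - ∑' s, p s * (rpsi s - 1) := by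
  have hs1 : Summable fun s => q s * (r s - 1) ^ 2 / 2 := h1.div_const 2
  have hs2 : Summable fun s => q s * (rpsi s ^ 2 - 1) := by
    have := h2.sub hq1.summable
    simpa [mul_sub, mul_one] using this
  have hs3 : Summable fun s => p s * (rpsi s - 1) := by
    have := h3.sub hp1.summable
    simpa [mul_sub, mul_one] using this
  have key : ∀ s, q s * ((r s - 1) ^ 2 / 2 - (rpsi s - 1) ^ 2 / 2 - (rpsi s - 1) * (r s - rpsi s))
      = q s * (r s - 1) ^ 2 / 2 + (1 / 2) * (q s * (rpsi s ^ 2 - 1)) - p s * (rpsi s - 1) := by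
    intro s; rw [hpr]; ring
  rw [tsum_congr key, Summable.tsum_sub ((hs1.add (hs2.mul_left _))) hs3,
    Summable.tsum_add hs1 (hs2.mul_left _), tsum_mul_left]
end

section
/- Let S be a countable type, let q and p be probability mass functions on S with p(s) = r(s)·q(s) for all s ∈ S, with r(s) > 0 on the support of q, and let r_ψ : S → ℝ satisfy r_ψ(s) > 0 for all s. Take f(t) = t·log t − (1+t)·log(1+t) on (0,∞). Assuming the summability of s ↦ q(s)·f(r(s)), s ↦ q(s)·log(1 + r_ψ(s)), and s ↦ p(s)·log(r_ψ(s)/(1 + r_ψ(s))), the integrated Bregman divergence satisfies BD_f(r ‖ r_ψ) = ∑_s q(s)·f(r(s)) + ∑_s q(s)·log(1 + r_ψ(s)) − ∑_s p(s)·log(r_ψ(s)/(1 + r_ψ(s))). In particular, minimizing BD_f over r_ψ is equivalent, up to an additive constant independent of r_ψ, to minimizing E_q[log(1 + r_ψ)] − E_p[log(r_ψ/(1 + r_ψ))]. -/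
open Real in
/-- Logistic row of Table 4: for `f(t) = t·log t − (1+t)·log(1+t)`
(so `f′(t) = log(t/(1+t))` and `t·f′(t) − f(t) = log(1+t)`), the integrated Bregman
divergence decomposes as
`BD_f(r ‖ r_ψ) = E_q[f(r)] + E_q[log(1+r_ψ)] − E_p[log(r_ψ/(1+r_ψ))]`, where `p = r·q`;
hence minimizing `BD_f` over `r_ψ` is minimizing
`E_q[log(1+r_ψ)] − E_p[log(r_ψ/(1+r_ψ))]` up to a constant. -/
theorem bregman_logistic_objective
    {S : Type*} [Countable S]
    (q p : S → ℝ) (r rpsi : S → ℝ)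
    (hq0 : ∀ s, 0 ≤ q s) (hq1 : HasSum q 1)
    (hp0 : ∀ s, 0 ≤ p s) (hp1 : HasSum p 1)
    (hpr : ∀ s, p s = r s * q s)
    (hr : ∀ s, 0 < q s → 0 < r s)
    (hrpsi : ∀ s, 0 < rpsi s)
    (f : ℝ → ℝ) (hf : ∀ t, f t = t * log t - (1 + t) * log (1 + t))
    (h1 : Summable (fun s => q s * f (r s)))
    (h2 : Summable (fun s => q s * log (1 + rpsi s)))
    (h3 : Summable (fun s => p s * log (rpsi s / (1 + rpsi s)))) :
    ∑' s, q s * (f (r s) - f (rpsi s) - log (rpsi s / (1 + rpsi s)) * (r s - rpsi s)) =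
      ∑' s, q s * f (r s)
        + ∑' s, q s * log (1 + rpsi s)
        - ∑' s, p s * log (rpsi s / (1 + rpsi s)) := by
  have key : ∀ s, q s * (f (r s) - f (rpsi s) - log (rpsi s / (1 + rpsi s)) * (r s - rpsi s))
      = q s * f (r s) + q s * log (1 + rpsi s) - p s * log (rpsi s / (1 + rpsi s)) := by
    intro s
    have ht := hrpsi s
    have ht1 : (0:ℝ) < 1 + rpsi s := by linarith
    rw [hf (rpsi s), hpr s, Real.log_div (ne_of_gt ht) (ne_of_gt ht1)]
    ring
  rw [tsum_congr key, Summable.tsum_sub (h1.add h2) h3, Summable.tsum_add h1 h2]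
end
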